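/- arXiv:1608.02188 — 3 statements merged into one kernel-verified Lean document; each statement's English description precedes it below -/
import Mathlib

section
/- For nonnegative segregated families (u_l) and (v_l) on a set Ω, the following chain of inclusions holds for each index l: {x : u_l(x) > v_l(x)} ⊆ {x : û_l(x) > v̂_l(x)} ⊆ {x : u_l(x) ≥ v_l(x)}, where û_l = u_l − ∑_{p≠l} u_p and v̂_l = v_l − ∑_{p≠l} v_p. -/
/-- Chain of inclusions `{u l > v l} ⊆ {û l > v̂ l} ⊆ {u l ≥ v l}` for nonnegative
segregated families. -/
theorem stmt_2 {Ω : Type*} {m : ℕ} (u v : Fin m → Ω → ℝ)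
    (hupos : ∀ i x, 0 ≤ u i x) (hvpos : ∀ i x, 0 ≤ v i x)
    (huseg : ∀ i j x, i ≠ j → u i x * u j x = 0)
    (hvseg : ∀ i j x, i ≠ j → v i x * v j x = 0)
    (uhat vhat : Fin m → Ω → ℝ)
    (huhat : ∀ l x, uhat l x = u l x - ∑ p ∈ Finset.univ.erase l, u p x)
    (hvhat : ∀ l x, vhat l x = v l x - ∑ p ∈ Finset.univ.erase l, v p x) :
    ∀ l : Fin m,
      {x : Ω | v l x < u l x} ⊆ {x : Ω | vhat l x < uhat l x} ∧
      {x : Ω | vhat l x < uhat l x} ⊆ {x : Ω | v l x ≤ u l x} := by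
  intro l
  have key : ∀ (w : Fin m → Ω → ℝ), (∀ i x, 0 ≤ w i x) →
      (∀ i j x, i ≠ j → w i x * w j x = 0) → ∀ x, 0 < w l x →
      ∑ p ∈ Finset.univ.erase l, w p x = 0 := by
    intro w hpos hseg x hlx
    apply Finset.sum_eq_zero
    intro p hp
    have hne : p ≠ l := (Finset.mem_erase.mp hp).1
    have := hseg p l x hne
    rcases mul_eq_zero.mp this with h | h
    · exact h
    · exact absurd h (ne_of_gt hlx)
  have sumnn : ∀ (w : Fin m → Ω → ℝ), (∀ i x, 0 ≤ w i x) → ∀ x,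
      0 ≤ ∑ p ∈ Finset.univ.erase l, w p x := by
    intro w hpos x
    exact Finset.sum_nonneg fun p _ => hpos p x
  constructor
  · intro x hx
    simp only [Set.mem_setOf_eq] at hx ⊢
    have hu : 0 < u l x := lt_of_le_of_lt (hvpos l x) hx
    rw [huhat, hvhat, key u hupos huseg x hu]
    have := sumnn v hvpos x
    linarith
  · intro x hx
    simp only [Set.mem_setOf_eq] at hx ⊢
    by_contra h
    push_neg at h
    have hv : 0 < v l x := lt_of_le_of_lt (hupos l x) h
    rw [huhat, hvhat, key v hvpos hvseg x hv] at hx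
    have := sumnn u hupos x
    linarith
end

section
/- Let M = max_l max_{Ω_h} (û_l − û_h^l + V) where (u_l) and (u_h^l) are two nonnegative segregated families agreeing on the boundary, and V is any grid function. If the maximum M is attained at index l₀ and grid point z₀ with u_{l₀}(z₀) = u_h^{l₀}(z₀) = 0 and M > max_{Ω_h} V, then there exists t₀ ≠ l₀ such that u_l(z₀) = 0 for all l ≠ t₀ and M = u_h^{t₀}(z₀) − u_{t₀}(z₀) + V(z₀); consequently M ≤ R where R := max_l max_{Ω_h} (û_h^l − û_l + V). -/
/-- Lemma 3.2 of the paper: if the maximum `M` of `û l - û_h l + V` over all indices and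
grid points is attained at `(l₀, z₀)` with `u l₀ z₀ = u_h l₀ z₀ = 0` and
`M > max V`, then there is `t₀ ≠ l₀` with `u l z₀ = 0` for all `l ≠ t₀` and
`M = u_h t₀ z₀ - u t₀ z₀ + V z₀`; consequently `M ≤ R` where
`R = max_l max (û_h l - û l + V)`. -/
theorem stmt_10 {ι : Type*} [Fintype ι] {m : ℕ}
    (u uh : Fin m → ι → ℝ) (V : ι → ℝ)
    (hupos : ∀ l z, 0 ≤ u l z) (huhpos : ∀ l z, 0 ≤ uh l z)
    (huseg : ∀ p q : Fin m, ∀ z, p ≠ q → u p z * u q z = 0)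
    (huhseg : ∀ p q : Fin m, ∀ z, p ≠ q → uh p z * uh q z = 0)
    (bd : ι → Prop) (hbd : ∀ l z, bd z → u l z = uh l z)
    (uhat uhhat : Fin m → ι → ℝ)
    (huhat : ∀ l z, uhat l z = u l z - ∑ p ∈ Finset.univ.erase l, u p z)
    (huhhat : ∀ l z, uhhat l z = uh l z - ∑ p ∈ Finset.univ.erase l, uh p z)
    (M : ℝ)
    (hMub : ∀ l : Fin m, ∀ z : ι, uhat l z - uhhat l z + V z ≤ M)
    (l₀ : Fin m) (z₀ : ι)
    (hMatt : M = uhat l₀ z₀ - uhhat l₀ z₀ + V z₀)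
    (hz₀ : u l₀ z₀ = 0 ∧ uh l₀ z₀ = 0)
    (hMV : ∀ z : ι, V z < M) :
    ∃ t₀ : Fin m, t₀ ≠ l₀ ∧ (∀ l : Fin m, l ≠ t₀ → u l z₀ = 0) ∧
      M = uh t₀ z₀ - u t₀ z₀ + V z₀ ∧
      (∃ l : Fin m, ∃ z : ι, M ≤ uhhat l z - uhat l z + V z) := by
  obtain ⟨hu0, huh0⟩ := hz₀
  have hSu : (0:ℝ) ≤ ∑ p ∈ Finset.univ.erase l₀, u p z₀ :=
    Finset.sum_nonneg fun p _ => hupos p z₀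
  have hM : M = ∑ p ∈ Finset.univ.erase l₀, uh p z₀
      - ∑ p ∈ Finset.univ.erase l₀, u p z₀ + V z₀ := by
    rw [hMatt, huhat, huhhat, hu0, huh0]; ring
  have hSuh : 0 < ∑ p ∈ Finset.univ.erase l₀, uh p z₀ := by
    have := hMV z₀; linarith
  obtain ⟨t₀, ht₀mem, ht₀pos⟩ : ∃ t₀ ∈ Finset.univ.erase l₀, 0 < uh t₀ z₀ := by
    by_contra h
    push_neg at h
    have : ∑ p ∈ Finset.univ.erase l₀, uh p z₀ ≤ 0 :=
      Finset.sum_nonpos fun p hp => h p hp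
    linarith
  have ht₀ne : t₀ ≠ l₀ := Finset.ne_of_mem_erase ht₀mem
  have huh_zero : ∀ p, p ≠ t₀ → uh p z₀ = 0 := by
    intro p hp
    rcases mul_eq_zero.mp (huhseg p t₀ z₀ hp) with h | h
    · exact h
    · exact absurd h (ne_of_gt ht₀pos)
  have hSuht : ∑ p ∈ Finset.univ.erase l₀, uh p z₀ = uh t₀ z₀ := by
    rw [Finset.sum_eq_single_of_mem t₀ ht₀mem]
    intro p _ hp; exact huh_zero p hp
  have hu_zero : ∀ l : Fin m, l ≠ t₀ → u l z₀ = 0 := by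
    intro s hs
    by_contra hus
    have husp : 0 < u s z₀ := lt_of_le_of_ne (hupos s z₀) (Ne.symm hus)
    have hsne : s ≠ l₀ := by rintro rfl; exact hus hu0
    have hu_other : ∀ p, p ≠ s → u p z₀ = 0 := by
      intro p hp
      rcases mul_eq_zero.mp (huseg p s z₀ hp) with h | h
      · exact h
      · exact absurd h hus
    have hSut : ∑ p ∈ Finset.univ.erase l₀, u p z₀ = u s z₀ := by
      rw [Finset.sum_eq_single_of_mem s
        (Finset.mem_erase.mpr ⟨hsne, Finset.mem_univ s⟩)]
      intro p _ hp; exact hu_other p hp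
    have hb := hMub s z₀
    rw [huhat, huhhat] at hb
    have hSus : ∑ p ∈ Finset.univ.erase s, u p z₀ = 0 :=
      Finset.sum_eq_zero fun p hp => hu_other p (Finset.ne_of_mem_erase hp)
    have hSuhs : ∑ p ∈ Finset.univ.erase s, uh p z₀ = uh t₀ z₀ := by
      rw [Finset.sum_eq_single_of_mem t₀
        (Finset.mem_erase.mpr ⟨Ne.symm hs, Finset.mem_univ t₀⟩)]
      intro p _ hp; exact huh_zero p hp
    have huhs : uh s z₀ = 0 := huh_zero s hs
    rw [hSus, hSuhs, huhs] at hb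
    rw [hSut, hSuht] at hM
    linarith
  have hSut' : ∑ p ∈ Finset.univ.erase l₀, u p z₀ = u t₀ z₀ := by
    rw [Finset.sum_eq_single_of_mem t₀ ht₀mem]
    intro p _ hp; exact hu_zero p hp
  have hMeq : M = uh t₀ z₀ - u t₀ z₀ + V z₀ := by
    rw [hM, hSut', hSuht]
  refine ⟨t₀, ht₀ne, hu_zero, hMeq, t₀, z₀, ?_⟩
  rw [huhat, huhhat]
  have hSus' : ∑ p ∈ Finset.univ.erase t₀, u p z₀ = 0 :=
    Finset.sum_eq_zero fun p hp => hu_zero p (Finset.ne_of_mem_erase hp)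
  have hSuhs' : ∑ p ∈ Finset.univ.erase t₀, uh p z₀ = 0 :=
    Finset.sum_eq_zero fun p hp => huh_zero p (Finset.ne_of_mem_erase hp)
  rw [hSus', hSuhs', hMeq]
  ring_nf
  linarith [le_refl (uh t₀ z₀ - u t₀ z₀ + V z₀)]
end

section
/- Suppose two families of nonnegative segregated grid functions (u_l) and (u_h^l) on Ω_h agree on the boundary, each f_l(z,·) is nondecreasing, and: (i) at any interior point where u_l(z) > 0 one has L_h û_l(z) = f_l(z,u_l(z)) up to truncation error bounded by α_h, and L_h û_h^l(z) ≤ f_l(z,u_h^l(z)); then the maximum over the grid of (û_l − û_h^l + V_h), with V_h(x,y) = α_h(x²+y²+1)/4, is attained on the set {u_l ≤ u_h^l}. -/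
/-- The 5-point discrete Laplacian on grid functions (mesh size `h`). -/
noncomputable def dLap (h : ℝ) (v : ℤ × ℤ → ℝ) (z : ℤ × ℤ) : ℝ :=
  (v (z.1 - 1, z.2) + v (z.1 + 1, z.2) - 4 * v z + v (z.1, z.2 - 1) + v (z.1, z.2 + 1)) / h ^ 2

/-- A point of the uniform grid `{0,...,N}²`. -/
def onGrid (N : ℕ) (z : ℤ × ℤ) : Prop := 0 ≤ z.1 ∧ z.1 ≤ N ∧ 0 ≤ z.2 ∧ z.2 ≤ N

/-- An interior point of the uniform grid `{0,...,N}²`. -/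
def inGrid (N : ℕ) (z : ℤ × ℤ) : Prop :=
  1 ≤ z.1 ∧ z.1 ≤ (N : ℤ) - 1 ∧ 1 ≤ z.2 ∧ z.2 ≤ (N : ℤ) - 1

/-- Lemma 3.1 of the paper: for two nonnegative segregated families of grid functions
agreeing on the boundary, with `f l z ·` nondecreasing, if at interior points where
`u l z > 0` one has `L_h û l z = f l z (u l z)` up to a truncation error bounded by
`α_h` and `L_h û_h l z ≤ f l z (u_h l z)`, then the maximum over the grid of
`û l - û_h l + V_h`, where `V_h (x,y) = α_h (x² + y² + 1)/4`, is attained on the set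
`{u l ≤ u_h l}`. -/
theorem stmt_15 (m N : ℕ) (hN : 1 ≤ N) (h : ℝ) (hh : 0 < h)
    (f : Fin m → ℤ × ℤ → ℝ → ℝ) (hfmono : ∀ l z, Monotone (f l z))
    (u uh : Fin m → ℤ × ℤ → ℝ)
    (hupos : ∀ l z, onGrid N z → 0 ≤ u l z)
    (huhpos : ∀ l z, onGrid N z → 0 ≤ uh l z)
    (huseg : ∀ p q : Fin m, ∀ z, onGrid N z → p ≠ q → u p z * u q z = 0)
    (huhseg : ∀ p q : Fin m, ∀ z, onGrid N z → p ≠ q → uh p z * uh q z = 0)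
    (hbdry : ∀ l z, onGrid N z → ¬inGrid N z → u l z = uh l z)
    (uhat uhhat : Fin m → ℤ × ℤ → ℝ)
    (huhat : ∀ l z, uhat l z = u l z - ∑ p ∈ Finset.univ.erase l, u p z)
    (huhhat : ∀ l z, uhhat l z = uh l z - ∑ p ∈ Finset.univ.erase l, uh p z)
    (αh : ℝ) (hαh : 0 ≤ αh)
    (V : ℤ × ℤ → ℝ)
    (hV : ∀ z : ℤ × ℤ, V z = αh * ((z.1 * h) ^ 2 + (z.2 * h) ^ 2 + 1) / 4)
    (hu_eq : ∀ l z, inGrid N z → 0 < u l z →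
      |dLap h (uhat l) z - f l z (u l z)| ≤ αh)
    (huh_le : ∀ l z, inGrid N z → 0 < u l z →
      dLap h (uhhat l) z ≤ f l z (uh l z)) :
    ∀ l : Fin m, ∃ z : ℤ × ℤ, onGrid N z ∧ u l z ≤ uh l z ∧
      ∀ z' : ℤ × ℤ, onGrid N z' →
        uhat l z' - uhhat l z' + V z' ≤ uhat l z - uhhat l z + V z := by
  intro l
  set w : ℤ × ℤ → ℝ := fun z => uhat l z - uhhat l z + V z with hwdef
  -- the grid as a finset
  have hgrid : ∀ z : ℤ × ℤ,
      onGrid N z ↔ z ∈ (Finset.Icc (0:ℤ) N ×ˢ Finset.Icc (0:ℤ) N) := by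
    intro z
    simp [onGrid, Finset.mem_product, Finset.mem_Icc, and_assoc]
  obtain ⟨z0, hz0mem, hz0max⟩ :=
    Finset.exists_max_image (Finset.Icc (0:ℤ) N ×ˢ Finset.Icc (0:ℤ) N) w
      ⟨((0:ℤ),(0:ℤ)), by simp [Finset.mem_product, Finset.mem_Icc]⟩
  set M := w z0 with hM
  have hmax : ∀ z, onGrid N z → w z ≤ M := fun z hz => hz0max z ((hgrid z).1 hz)
  have hh2 : (0:ℝ) < h ^ 2 := by positivity
  -- discrete Laplacian of V is αh
  have hdV : ∀ z : ℤ × ℤ, dLap h V z = αh := by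
    intro z
    simp only [dLap, hV]
    push_cast
    field_simp
    ring
  -- main claim: from any max point, reach a max point with u ≤ uh
  have key : ∀ k : ℕ, ∀ z : ℤ × ℤ, onGrid N z → w z = M → ((N : ℤ) - z.1).toNat ≤ k →
      ∃ z', onGrid N z' ∧ u l z' ≤ uh l z' ∧ w z' = M := by
    intro k
    induction k with
    | zero =>
      intro z hz hwz hk
      have h1 : z.1 = (N : ℤ) := by
        obtain ⟨a, b, c, d⟩ := hz
        omega
      have hnin : ¬ inGrid N z := by
        intro ⟨a, b, c, d⟩
        omega
      exact ⟨z, hz, le_of_eq (hbdry l z hz hnin), hwz⟩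
    | succ k ih =>
      intro z hz hwz hk
      by_cases hle : u l z ≤ uh l z
      · exact ⟨z, hz, hle, hwz⟩
      push_neg at hle
      have hu0 : 0 < u l z := lt_of_le_of_lt (huhpos l z hz) hle
      by_cases hin : inGrid N z
      swap
      · exact absurd (hbdry l z hz hin) (by linarith)
      obtain ⟨ha, hb, hc, hd⟩ := hin
      obtain ⟨ha', hb', hc', hd'⟩ := hz
      -- neighbors on grid
      have hW : onGrid N (z.1 - 1, z.2) := ⟨by omega, by omega, by omega, by omega⟩
      have hE : onGrid N (z.1 + 1, z.2) := ⟨by omega, by omega, by omega, by omega⟩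
      have hS : onGrid N (z.1, z.2 - 1) := ⟨by omega, by omega, by omega, by omega⟩
      have hNo : onGrid N (z.1, z.2 + 1) := ⟨by omega, by omega, by omega, by omega⟩
      -- discrete Laplacian of w is nonneg at z
      have hsplit : dLap h w z
          = dLap h (uhat l) z - dLap h (uhhat l) z + dLap h V z := by
        simp only [hwdef, dLap]
        ring
      have h1 := (abs_le.mp (hu_eq l z ⟨ha, hb, hc, hd⟩ hu0)).1
      have h2 := huh_le l z ⟨ha, hb, hc, hd⟩ hu0
      have h3 := hfmono l z (le_of_lt hle)
      have hdw : 0 ≤ dLap h w z := by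
        rw [hsplit, hdV]
        linarith
      have hnum : 0 ≤ w (z.1 - 1, z.2) + w (z.1 + 1, z.2) - 4 * w z
          + w (z.1, z.2 - 1) + w (z.1, z.2 + 1) := by
        rw [dLap] at hdw
        have := (le_div_iff₀ hh2).mp hdw
        linarith
      -- east neighbor is also a max point
      have hEeq : w (z.1 + 1, z.2) = M := by
        have h4 := hmax _ hW
        have h5 := hmax _ hE
        have h6 := hmax _ hS
        have h7 := hmax _ hNo
        have : M ≤ w (z.1 + 1, z.2) := by
          rw [hwz] at hnum; linarith
        linarith
      have hk' : ((N : ℤ) - (z.1 + 1, z.2).1).toNat ≤ k := by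
        simp only
        omega
      exact ih (z.1 + 1, z.2) hE hEeq hk'
  obtain ⟨z', hz', hle', hweq'⟩ := key ((N : ℤ) - z0.1).toNat z0 ((hgrid z0).2 hz0mem) rfl le_rfl
  refine ⟨z', hz', hle', fun z'' hz'' => ?_⟩
  have := hmax z'' hz''
  have : w z'' ≤ w z' := by rw [hweq']; exact hmax z'' hz''
  simpa [hwdef] using this
end
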